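/- arXiv:2506.06019 — 3 statements merged into one kernel-verified Lean document; each statement's English description precedes it below -/
import Mathlib

section
/- There exists a constant C > 0 such that for all integers M ≥ 2 and r ≥ 2, every initialization parameter s ∈ ℕ⁺, and both choices of inner-level mutation (local or global), the (1+1)-ENAS algorithm with one-bit outer-level mutation finds an optimal solution of the Mcc problem within expected runtime E[T] ≤ C·r·M·ln(rM). -/
open scoped ENNReal

namespace ENAS

/-- A cell: counts of A-, B-, C-type blocks, indexed by `Fin 3` (`0` = A, `1` = B, `2` = C). -/
abbrev Cell : Type := Fin 3 → ℕ

/-- A solution with `K + 1` cells (i.e. for the `Mcc` problem with `M = K + 2` classes). -/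
abbrev Solution (K : ℕ) : Type := Fin (K + 1) → Cell

/-- `I^m(x)`: the number of correctly formed triangle-shaped regions of a cell. -/
def Iterm (r : ℕ) (c : Cell) : ℕ := min (c 1 + c 2) (2 * r)

/-- `J^m(x)`: the number of correctly formed segment-shaped regions of a cell. -/
def Jterm (r : ℕ) (c : Cell) : ℕ := min (c 1) r + min (c 0) (r + (r - c 1))

/-- `ε(x)`: the number of misclassified segments of class `M`, computed in the integers
from the data of the last cell. -/
def eps (r : ℕ) (c : Cell) : ℤ := max 0 (min ((c 1 : ℤ) - (r : ℤ)) ((r : ℤ) - (c 2 : ℤ)))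

/-- `𝕀(x)`. -/
def Ival {K : ℕ} (r : ℕ) (x : Solution K) : ℕ := ∑ m, Iterm r (x m)

/-- `𝕁(x)`. -/
def Jval {K : ℕ} (r : ℕ) (x : Solution K) : ℕ := ∑ m, Jterm r (x m)

/-- The fitness `F(x)` of a solution for the `Mcc` problem with `M = K + 2` classes and
parameter `r`, where `n = 2 r M`, `Ar_tri = (1/2)·sin(2π/n)`, `Ar_seg = π/n − (1/2)·sin(2π/n)`,
and `F(x) = (Ar_tri·(𝕀(x) + 2r) + Ar_seg·(𝕁(x) + 2r − ε(x)))/π`. -/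
noncomputable def fitness {K : ℕ} (r : ℕ) (x : Solution K) : ℝ :=
  let n : ℕ := 2 * r * (K + 2)
  let ArTri : ℝ := (1 / 2) * Real.sin (2 * Real.pi / n)
  let ArSeg : ℝ := Real.pi / n - (1 / 2) * Real.sin (2 * Real.pi / n)
  (ArTri * ((Ival r x : ℝ) + 2 * r)
      + ArSeg * ((Jval r x : ℝ) + 2 * r - (eps r (x (Fin.last K)) : ℝ))) / Real.pi

/-- A pi-type of PMFs: sample each coordinate independently. -/
noncomputable def pmfPi {α : Type} : ∀ (n : ℕ), (Fin n → PMF α) → PMF (Fin n → α)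
  | 0, _ => PMF.pure (fun i => i.elim0)
  | n + 1, p =>
      (p 0).bind fun a => (pmfPi n (fun i => p i.succ)).bind fun f => PMF.pure (Fin.cons a f)

/-- One application of the mutation operation (Definition 1) to a cell: choose a block type `V`
uniformly at random, then uniformly at random perform Addition, Deletion, or Modification. -/
noncomputable def mutateCellOnce (c : Cell) : PMF Cell :=
  (PMF.uniformOfFintype (Fin 3)).bind fun V =>
    (PMF.uniformOfFintype (Fin 3)).bind fun op =>
      if op = 0 then
        -- Addition
        PMF.pure (Function.update c V (c V + 1))
      else if op = 1 then
        -- Deletion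
        PMF.pure (if 0 < c V then Function.update c V (c V - 1) else c)
      else
        -- Modification
        (PMF.uniformOfFinset (Finset.univ.erase V) (by
            rw [← Finset.card_pos, Finset.card_erase_of_mem (Finset.mem_univ _)]
            simp)).bind fun W =>
          PMF.pure
            (if 0 < c V then
              Function.update (Function.update c V (c V - 1)) W (c W + 1)
            else c)

/-- `k` consecutive applications of the mutation operation to a cell. -/
noncomputable def mutateCellTimes : ℕ → Cell → PMF Cell
  | 0, c => PMF.pure c
  | k + 1, c => (mutateCellOnce c).bind (mutateCellTimes k)

/-- Inner-level mutation on a selected cell: local (`inner = false`) applies the mutation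
operation once; global (`inner = true`) applies it `K` consecutive times with `K ~ Pois(1)`. -/
noncomputable def innerMutate (inner : Bool) (c : Cell) : PMF Cell :=
  if inner then (ProbabilityTheory.poissonPMF 1).bind fun k => mutateCellTimes k c
  else mutateCellOnce c

/-- One-bit outer-level mutation: select exactly one of the `K + 1` cells uniformly at random
and apply the inner-level mutation to it. -/
noncomputable def offspringOneBit {K : ℕ} (inner : Bool) (x : Solution K) : PMF (Solution K) :=
  (PMF.uniformOfFintype (Fin (K + 1))).bind fun m =>
    (innerMutate inner (x m)).bind fun c => PMF.pure (Function.update x m c)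

/-- Bit-wise outer-level mutation: independently for each of the `K + 1` cells, with
probability `1/(K + 1)` apply the inner-level mutation to it, otherwise keep it. -/
noncomputable def offspringBitWise {K : ℕ} (inner : Bool) (x : Solution K) : PMF (Solution K) :=
  pmfPi (K + 1) fun m =>
    (PMF.bernoulli ((K + 1 : ℕ) : NNReal)⁻¹
        (inv_le_one_of_one_le₀ (by exact_mod_cast Nat.one_le_iff_ne_zero.mpr (Nat.succ_ne_zero K)))).bind
      fun b => if b then innerMutate inner (x m) else PMF.pure (x m)

open scoped Classical in
/-- One generation of the (1+1)-ENAS algorithm: generate an offspring `y` from `x` by the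
mutation operator `off` and accept it iff `F(y) ≥ F(x)` (ties prefer the offspring). -/
noncomputable def step {K : ℕ} (r : ℕ) (off : Solution K → PMF (Solution K)) (x : Solution K) :
    PMF (Solution K) :=
  (off x).map fun y => if fitness r x ≤ fitness r y then y else x

/-- The initial solution: all `3 (K + 1)` block counts are drawn independently and uniformly
from `{1, …, s}`. -/
noncomputable def initPMF (K s : ℕ) (hs : 1 ≤ s) : PMF (Solution K) :=
  pmfPi (K + 1) fun _ =>
    pmfPi 3 fun _ => PMF.uniformOfFinset (Finset.Icc 1 s) (Finset.nonempty_Icc.mpr hs)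

/-- The distribution of the solution `x_t` maintained by the (1+1)-ENAS algorithm after `t`
generations, starting from the initial distribution `init`. -/
noncomputable def solutionDist {K : ℕ} (r : ℕ) (off : Solution K → PMF (Solution K))
    (init : PMF (Solution K)) : ℕ → PMF (Solution K)
  | 0 => init
  | t + 1 => (solutionDist r off init t).bind (step r off)

open scoped Classical in
/-- The expected runtime `E[T]` of the (1+1)-ENAS algorithm: since the set of optimal
solutions (those with `F(x) = 1`) is absorbing, `E[T] = ∑_{t ≥ 0} Pr[F(x_t) ≠ 1]`. -/
noncomputable def expectedRuntime {K : ℕ} (r : ℕ) (off : Solution K → PMF (Solution K))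
    (init : PMF (Solution K)) : ℝ≥0∞ :=
  ∑' t : ℕ, ∑' x : Solution K, if fitness r x = 1 then 0 else solutionDist r off init t x

end ENAS
namespace ENASP
open ENAS Real

/- ===== analytic core ===== -/

lemma sin_lower (x : ℝ) (h0 : 0 ≤ x) (h1 : x ≤ 0.8) : x / 2 ≤ Real.sin x := by
  have hb := Real.sin_bound (x := x) (by rw [abs_of_nonneg h0]; linarith)
  rw [abs_of_nonneg h0] at hb
  have h2 := abs_le.mp hb
  have hx2 : x ^ 2 ≤ 0.64 := by nlinarith
  have hx3 : x ^ 3 ≤ 0.64 * x := by nlinarith [mul_le_mul_of_nonneg_right hx2 h0]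
  have hx4 : x ^ 4 ≤ 0.512 * x := by nlinarith [mul_le_mul_of_nonneg_right hx3 h0]
  have hx5 : x ^ 5 ≤ 0.8 * x ^ 4 := by nlinarith [pow_nonneg h0 4]
  linarith [h2.1]

lemma sin_upper (x : ℝ) (h0 : 0 ≤ x) (h1 : x ≤ 0.8) : Real.sin x ≤ x - x ^ 3 / 8 := by
  have hb := Real.sin_bound (x := x) (by rw [abs_of_nonneg h0]; linarith)
  rw [abs_of_nonneg h0] at hb
  have h2 := abs_le.mp hb
  have hx4 : x ^ 4 ≤ 0.8 * x ^ 3 := by nlinarith [pow_nonneg h0 3]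
  have hx5 : x ^ 5 ≤ 0.8 * x ^ 4 := by nlinarith [pow_nonneg h0 4]
  linarith [h2.2]

noncomputable def triR (n : ℝ) : ℝ := (1 / 2) * Real.sin (2 * Real.pi / n)
noncomputable def segR (n : ℝ) : ℝ := Real.pi / n - (1 / 2) * Real.sin (2 * Real.pi / n)

section analytic
variable {n : ℝ} (hn : 8 ≤ n)
include hn

lemma npos : (0:ℝ) < n := by linarith
lemma theta_pos : 0 < 2 * Real.pi / n := by
  have := Real.pi_pos; positivity
lemma theta_le : 2 * Real.pi / n ≤ 0.8 := by
  rw [div_le_iff₀ (npos hn)]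
  nlinarith [Real.pi_lt_d2]

lemma segR_eq : segR n = (2 * Real.pi / n - Real.sin (2 * Real.pi / n)) / 2 := by
  have h := npos hn
  rw [segR]; ring

lemma segR_lb : Real.pi ≤ n ^ 3 * segR n := by
  set θ := 2 * Real.pi / n with hθ
  have h1 : Real.sin θ ≤ θ - θ ^ 3 / 8 :=
    sin_upper θ (le_of_lt (theta_pos hn)) (theta_le hn)
  have h2 : θ ^ 3 / 16 ≤ segR n := by rw [segR_eq hn]; linarith
  have h3 : n ^ 3 * (θ ^ 3 / 16) = Real.pi ^ 3 / 2 := by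
    have h := (npos hn).ne'
    rw [hθ]; field_simp; ring
  have h4 : Real.pi ≤ Real.pi ^ 3 / 2 := by
    have h5 : (9:ℝ) ≤ Real.pi ^ 2 := by nlinarith [Real.pi_gt_three]
    nlinarith [Real.pi_pos, h5]
  calc Real.pi ≤ Real.pi ^ 3 / 2 := h4
    _ = n ^ 3 * (θ ^ 3 / 16) := h3.symm
    _ ≤ n ^ 3 * segR n := by
        have : (0:ℝ) < n ^ 3 := by positivity
        nlinarith [h2]

lemma segR_pos : 0 < segR n := by
  have h1 := segR_lb hn
  have h2 : (0:ℝ) < n ^ 3 := by have := npos hn; positivity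
  nlinarith [Real.pi_pos]

lemma seg_le_tri : segR n ≤ triR n := by
  set θ := 2 * Real.pi / n with hθ
  have h1 : θ / 2 ≤ Real.sin θ := sin_lower θ (le_of_lt (theta_pos hn)) (theta_le hn)
  rw [segR_eq hn, triR]
  linarith

lemma tri_pos : 0 < triR n := lt_of_lt_of_le (segR_pos hn) (seg_le_tri hn)

omit hn in
lemma tri_add_seg : triR n + segR n = Real.pi / n := by rw [triR, segR]; ring

lemma segR_le : segR n ≤ Real.pi / n := by
  have h1 := tri_pos hn; have h2 := tri_add_seg (n := n); linarith

end analytic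

/- ===== cell-level combinatorics ===== -/

def eD (r : ℕ) (c : Cell) : ℕ := min (c 1 - r) (r - c 2)

def cA (c : Cell) : Cell := Function.update c 0 (c 0 + 1)
def cC (c : Cell) : Cell := Function.update c 2 (c 2 + 1)
def cE (c : Cell) : Cell :=
  Function.update (Function.update c 1 (c 1 - 1)) 2 (c 2 + 1)

lemma cA_apply (c : Cell) : cA c 0 = c 0 + 1 ∧ cA c 1 = c 1 ∧ cA c 2 = c 2 :=
  ⟨Function.update_self _ _ _, Function.update_of_ne (by decide) _ _,
    Function.update_of_ne (by decide) _ _⟩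
lemma cC_apply (c : Cell) : cC c 0 = c 0 ∧ cC c 1 = c 1 ∧ cC c 2 = c 2 + 1 :=
  ⟨Function.update_of_ne (by decide) _ _, Function.update_of_ne (by decide) _ _,
    Function.update_self _ _ _⟩
lemma cE_apply (c : Cell) : cE c 0 = c 0 ∧ cE c 1 = c 1 - 1 ∧ cE c 2 = c 2 + 1 := by
  refine ⟨?_, ?_, Function.update_self _ _ _⟩
  · rw [cE, Function.update_of_ne (by decide), Function.update_of_ne (by decide)]
  · rw [cE, Function.update_of_ne (by decide), Function.update_self]

lemma Iterm_le (r : ℕ) (c : Cell) : Iterm r c ≤ 2 * r := min_le_right _ _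
lemma Jterm_le (r : ℕ) (c : Cell) : Jterm r c ≤ 2 * r := by
  have h1 := min_le_right (c 1) r
  have h2 := min_le_right (c 0) (r + (r - c 1))
  have h3 := min_le_left (c 1) r
  simp only [Jterm]; omega
lemma eD_le (r : ℕ) (c : Cell) : eD r c ≤ r := by
  have := min_le_right (c 1 - r) (r - c 2); simp only [eD]; omega

lemma eps_eq_eD (r : ℕ) (c : Cell) : eps r c = (eD r c : ℤ) := by
  simp only [eps, eD]; omega

lemma IA (r : ℕ) (c : Cell) : Iterm r (cA c) = Iterm r c := by
  obtain ⟨h0, h1, h2⟩ := cA_apply c; simp only [Iterm, h1, h2]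
lemma JA (r : ℕ) (c : Cell) :
    Jterm r c + (if Jterm r c < 2 * r then 1 else 0) ≤ Jterm r (cA c) := by
  obtain ⟨h0, h1, h2⟩ := cA_apply c; simp only [Jterm, h0, h1]
  split_ifs with h <;> simp only [h, if_true, if_false] <;> omega
lemma EA (r : ℕ) (c : Cell) : eD r (cA c) = eD r c := by
  obtain ⟨h0, h1, h2⟩ := cA_apply c; simp only [eD, h1, h2]

lemma IC (r : ℕ) (c : Cell) :
    Iterm r c + (if Iterm r c < 2 * r then 1 else 0) ≤ Iterm r (cC c) := by
  obtain ⟨h0, h1, h2⟩ := cC_apply c; simp only [Iterm, h1, h2]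
  split_ifs with h <;> simp only [h, if_true, if_false] <;> omega
lemma JC (r : ℕ) (c : Cell) : Jterm r (cC c) = Jterm r c := by
  obtain ⟨h0, h1, h2⟩ := cC_apply c; simp only [Jterm, h0, h1]
lemma EC (r : ℕ) (c : Cell) : eD r (cC c) ≤ eD r c := by
  obtain ⟨h0, h1, h2⟩ := cC_apply c; simp only [eD, h1, h2]; omega

lemma IE (r : ℕ) (c : Cell) (h : 0 < eD r c) : Iterm r (cE c) = Iterm r c := by
  obtain ⟨h0, h1, h2⟩ := cE_apply c; simp only [eD] at h; simp only [Iterm, h1, h2]; omega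
lemma JE (r : ℕ) (c : Cell) (h : 0 < eD r c) : Jterm r (cE c) = Jterm r c := by
  obtain ⟨h0, h1, h2⟩ := cE_apply c; simp only [eD] at h; simp only [Jterm, h0, h1]; omega
lemma EE (r : ℕ) (c : Cell) (h : 0 < eD r c) : eD r (cE c) + 1 = eD r c := by
  obtain ⟨h0, h1, h2⟩ := cE_apply c; simp only [eD] at h ⊢; omega
lemma eD_pos_B (r : ℕ) (c : Cell) (h : 0 < eD r c) : 0 < c 1 := by
  simp only [eD] at h; omega

end ENASP
namespace ENASP
open ENAS Real

/- ===== the potential function ===== -/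

noncomputable def tri (K r : ℕ) : ℝ := triR ((2 * r * (K + 2) : ℕ) : ℝ)
noncomputable def seg (K r : ℕ) : ℝ := segR ((2 * r * (K + 2) : ℕ) : ℝ)

def aN (K r : ℕ) (x : Solution K) : ℕ := ∑ m, (2 * r - Iterm r (x m))
def jN (K r : ℕ) (x : Solution K) : ℕ := ∑ m, (2 * r - Jterm r (x m))
def bN (K r : ℕ) (x : Solution K) : ℕ := jN K r x + eD r (x (Fin.last K))

noncomputable def gR (K r : ℕ) (x : Solution K) : ℝ :=
  tri K r * (aN K r x : ℝ) + seg K r * (bN K r x : ℝ)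

lemma hn8 {K r : ℕ} (hr : 2 ≤ r) : (8 : ℝ) ≤ ((2 * r * (K + 2) : ℕ) : ℝ) := by
  have : (8 : ℕ) ≤ 2 * r * (K + 2) := by nlinarith
  exact_mod_cast this

lemma hn0 {K r : ℕ} (hr : 2 ≤ r) : ((2 * r * (K + 2) : ℕ) : ℝ) ≠ 0 := by
  have := hn8 (K := K) (r := r) hr; linarith

lemma seg_pos {K r : ℕ} (hr : 2 ≤ r) : 0 < seg K r := segR_pos (hn8 hr)
lemma tri_pos' {K r : ℕ} (hr : 2 ≤ r) : 0 < tri K r := tri_pos (hn8 hr)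
lemma seg_le_tri' {K r : ℕ} (hr : 2 ≤ r) : seg K r ≤ tri K r := seg_le_tri (hn8 hr)

lemma gR_nonneg {K r : ℕ} (hr : 2 ≤ r) (x : Solution K) : 0 ≤ gR K r x := by
  have h1 := seg_pos (K := K) hr
  have h2 := tri_pos' (K := K) hr
  have h3 : (0:ℝ) ≤ (aN K r x : ℝ) := Nat.cast_nonneg _
  have h4 : (0:ℝ) ≤ (bN K r x : ℝ) := Nat.cast_nonneg _
  rw [gR]; positivity

/- counting identities -/
lemma Ival_aN {K r : ℕ} (x : Solution K) : Ival r x + aN K r x = (K + 1) * (2 * r) := by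
  rw [Ival, aN, ← Finset.sum_add_distrib]
  rw [Finset.sum_congr rfl (fun m _ => Nat.add_sub_cancel' (Iterm_le r (x m)))]
  simp [Finset.sum_const, Finset.card_univ]

lemma Jval_jN {K r : ℕ} (x : Solution K) : Jval r x + jN K r x = (K + 1) * (2 * r) := by
  rw [Jval, jN, ← Finset.sum_add_distrib]
  rw [Finset.sum_congr rfl (fun m _ => Nat.add_sub_cancel' (Jterm_le r (x m)))]
  simp [Finset.sum_const, Finset.card_univ]

lemma fitness_eq {K r : ℕ} (hr : 2 ≤ r) (x : Solution K) :
    fitness r x = 1 - gR K r x / Real.pi := by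
  have hπ := Real.pi_pos
  have h0 := hn0 (K := K) (r := r) hr
  have hshow : fitness r x =
      (tri K r * ((Ival r x : ℝ) + 2 * r)
        + seg K r * ((Jval r x : ℝ) + 2 * r - (eps r (x (Fin.last K)) : ℝ))) / Real.pi := rfl
  have hI : (Ival r x : ℝ) = (K + 1) * (2 * r) - (aN K r x : ℝ) := by
    have := Ival_aN (r := r) x
    have := congrArg (Nat.cast : ℕ → ℝ) this
    push_cast at this ⊢; linarith
  have hJ : (Jval r x : ℝ) = (K + 1) * (2 * r) - (jN K r x : ℝ) := by
    have := Jval_jN (r := r) x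
    have := congrArg (Nat.cast : ℕ → ℝ) this
    push_cast at this ⊢; linarith
  have hE : ((eps r (x (Fin.last K)) : ℤ) : ℝ) = (eD r (x (Fin.last K)) : ℝ) := by
    rw [eps_eq_eD]; push_cast; ring
  have hkey : tri K r * ((Ival r x : ℝ) + 2 * r)
      + seg K r * ((Jval r x : ℝ) + 2 * r - (eps r (x (Fin.last K)) : ℝ))
      = Real.pi - gR K r x := by
    have hnR : ((2 * r * (K + 2) : ℕ) : ℝ) = 2 * r * (K + 2) := by push_cast; ring
    have hts : tri K r + seg K r = Real.pi / ((2 * r * (K + 2) : ℕ) : ℝ) :=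
      tri_add_seg
    have hmul : Real.pi / ((2 * r * (K + 2) : ℕ) : ℝ) * ((2 * r * (K + 2) : ℕ) : ℝ)
        = Real.pi := div_mul_cancel₀ _ h0
    have hb : (bN K r x : ℝ) = (jN K r x : ℝ) + (eD r (x (Fin.last K)) : ℝ) := by
      rw [bN]; push_cast; ring
    calc tri K r * ((Ival r x : ℝ) + 2 * r)
        + seg K r * ((Jval r x : ℝ) + 2 * r - (eps r (x (Fin.last K)) : ℝ))
        = (tri K r + seg K r) * ((2 * r * (K + 2) : ℕ) : ℝ) - gR K r x := by
          rw [hI, hJ, hE, gR, hb, hnR]; ring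
      _ = Real.pi - gR K r x := by rw [hts, hmul]
  rw [hshow, hkey]
  field_simp

lemma fitness_le_iff {K r : ℕ} (hr : 2 ≤ r) (x y : Solution K) :
    fitness r x ≤ fitness r y ↔ gR K r y ≤ gR K r x := by
  rw [fitness_eq hr, fitness_eq hr]
  have hπ := Real.pi_pos
  rw [sub_le_sub_iff_left]; exact div_le_div_iff_of_pos_right Real.pi_pos

end ENASP
namespace ENASP
open ENAS Real

/- ===== update identities ===== -/

lemma sum_upd {K : ℕ} (x : Solution K) (m : Fin (K + 1)) (c : Cell) (F : Cell → ℕ) :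
    (∑ m', F (Function.update x m c m')) + F (x m) = (∑ m', F (x m')) + F c := by
  classical
  have hL := Finset.sum_eq_add_sum_sdiff_singleton_of_mem (Finset.mem_univ m)
    (fun m' => F (Function.update x m c m'))
  have hR := Finset.sum_eq_add_sum_sdiff_singleton_of_mem (Finset.mem_univ m)
    (fun m' => F (x m'))
  have hupdm : Function.update x m c m = c := Function.update_self _ _ _
  have hcong : ∑ m' ∈ Finset.univ \ {m}, F (Function.update x m c m')
      = ∑ m' ∈ Finset.univ \ {m}, F (x m') := by
    apply Finset.sum_congr rfl
    intro m' hm'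
    have hne : m' ≠ m := by simpa using (Finset.mem_sdiff.mp hm').2
    rw [Function.update_of_ne hne]
  simp only [hupdm, hcong] at hL
  rw [hL, hR]
  omega

lemma aN_upd {K r : ℕ} (x : Solution K) (m : Fin (K + 1)) (c : Cell) :
    aN K r (Function.update x m c) + (2 * r - Iterm r (x m))
      = aN K r x + (2 * r - Iterm r c) := by
  rw [aN, aN]; exact sum_upd x m c (fun c' => 2 * r - Iterm r c')

lemma jN_upd {K r : ℕ} (x : Solution K) (m : Fin (K + 1)) (c : Cell) :
    jN K r (Function.update x m c) + (2 * r - Jterm r (x m))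
      = jN K r x + (2 * r - Jterm r c) := by
  rw [jN, jN]; exact sum_upd x m c (fun c' => 2 * r - Jterm r c')

lemma upd_last {K : ℕ} (x : Solution K) (m : Fin (K + 1)) (c : Cell) :
    Function.update x m c (Fin.last K)
      = if Fin.last K = m then c else x (Fin.last K) :=
  Function.update_apply x m c (Fin.last K)

/- ===== the three improving moves, at solution level ===== -/

lemma gR_A {K r : ℕ} (hr : 2 ≤ r) (x : Solution K) (m : Fin (K + 1)) :
    gR K r (Function.update x m (cA (x m)))
      + seg K r * (if Jterm r (x m) < 2 * r then (1:ℝ) else 0) ≤ gR K r x := by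
  set y := Function.update x m (cA (x m)) with hy
  have ha : aN K r y = aN K r x := by
    have h1 := aN_upd (r := r) x m (cA (x m))
    rw [← hy, IA] at h1; omega
  have hjn : jN K r y + (if Jterm r (x m) < 2 * r then 1 else 0) ≤ jN K r x := by
    have h1 := jN_upd (r := r) x m (cA (x m))
    rw [← hy] at h1
    have h2 := JA r (x m)
    have h3 := Jterm_le r (cA (x m))
    have h4 := Jterm_le r (x m)
    split_ifs at h1 h2 ⊢ <;> omega
  have he : eD r (y (Fin.last K)) = eD r (x (Fin.last K)) := by
    rw [hy, upd_last]
    split_ifs with h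
    · rw [h, EA]
    · rfl
  have hb : bN K r y + (if Jterm r (x m) < 2 * r then 1 else 0) ≤ bN K r x := by
    rw [bN, bN, he]; omega
  have hbR : (bN K r y : ℝ) + (if Jterm r (x m) < 2 * r then (1:ℝ) else 0)
      ≤ (bN K r x : ℝ) := by
    split_ifs at hb ⊢ <;> exact_mod_cast hb
  have hseg := seg_pos (K := K) hr
  rw [gR, gR, ha]
  nlinarith [hbR, hseg]

lemma gR_C {K r : ℕ} (hr : 2 ≤ r) (x : Solution K) (m : Fin (K + 1)) :
    gR K r (Function.update x m (cC (x m)))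
      + tri K r * (if Iterm r (x m) < 2 * r then (1:ℝ) else 0) ≤ gR K r x := by
  set y := Function.update x m (cC (x m)) with hy
  have ha : aN K r y + (if Iterm r (x m) < 2 * r then 1 else 0) ≤ aN K r x := by
    have h1 := aN_upd (r := r) x m (cC (x m))
    rw [← hy] at h1
    have h2 := IC r (x m)
    have h3 := Iterm_le r (cC (x m))
    have h4 := Iterm_le r (x m)
    split_ifs at h1 h2 ⊢ <;> omega
  have hjn : jN K r y = jN K r x := by
    have h1 := jN_upd (r := r) x m (cC (x m))
    rw [← hy, JC] at h1; omega
  have he : eD r (y (Fin.last K)) ≤ eD r (x (Fin.last K)) := by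
    rw [hy, upd_last]
    split_ifs with h
    · rw [h]; exact EC r (x m)
    · exact le_rfl
  have hb : bN K r y ≤ bN K r x := by rw [bN, bN, hjn]; omega
  have haR : (aN K r y : ℝ) + (if Iterm r (x m) < 2 * r then (1:ℝ) else 0)
      ≤ (aN K r x : ℝ) := by
    split_ifs at ha ⊢ <;> exact_mod_cast ha
  have hbR : (bN K r y : ℝ) ≤ (bN K r x : ℝ) := by exact_mod_cast hb
  have hseg := seg_pos (K := K) hr
  have htri := tri_pos' (K := K) hr
  rw [gR, gR]
  nlinarith [haR, hbR, hseg, htri]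

lemma gR_E {K r : ℕ} (hr : 2 ≤ r) (x : Solution K)
    (h : 0 < eD r (x (Fin.last K))) :
    gR K r (Function.update x (Fin.last K) (cE (x (Fin.last K))))
      + seg K r ≤ gR K r x := by
  set y := Function.update x (Fin.last K) (cE (x (Fin.last K))) with hy
  have hylast : y (Fin.last K) = cE (x (Fin.last K)) := Function.update_self _ _ _
  have ha : aN K r y = aN K r x := by
    have h1 := aN_upd (r := r) x (Fin.last K) (cE (x (Fin.last K)))
    rw [← hy, IE r (x (Fin.last K)) h] at h1; omega
  have hjn : jN K r y = jN K r x := by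
    have h1 := jN_upd (r := r) x (Fin.last K) (cE (x (Fin.last K)))
    rw [← hy, JE r (x (Fin.last K)) h] at h1; omega
  have he : eD r (y (Fin.last K)) + 1 = eD r (x (Fin.last K)) := by
    rw [hylast]; exact EE r (x (Fin.last K)) h
  have hb : bN K r y + 1 = bN K r x := by rw [bN, bN, hjn]; omega
  have hbR : (bN K r y : ℝ) + 1 = (bN K r x : ℝ) := by exact_mod_cast hb
  have hseg := seg_pos (K := K) hr
  rw [gR, gR, ha]
  nlinarith [hbR, hseg]

/- ===== bounds on gR ===== -/

lemma gR_le_pi {K r : ℕ} (hr : 2 ≤ r) (x : Solution K) : gR K r x ≤ Real.pi := by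
  have haN : aN K r x ≤ (K + 1) * (2 * r) := by
    have := Ival_aN (K := K) (r := r) x; omega
  have hjN : jN K r x ≤ (K + 1) * (2 * r) := by
    have := Jval_jN (K := K) (r := r) x; omega
  have hbN : bN K r x ≤ 2 * r * (K + 2) := by
    have := eD_le r (x (Fin.last K)); rw [bN]; nlinarith
  have haN2 : aN K r x ≤ 2 * r * (K + 2) := by nlinarith
  have hseg := seg_pos (K := K) hr
  have htri := tri_pos' (K := K) hr
  have hts : tri K r + seg K r = Real.pi / ((2 * r * (K + 2) : ℕ) : ℝ) := tri_add_seg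
  have h0 := hn0 (K := K) (r := r) hr
  have h8 := hn8 (K := K) (r := r) hr
  have hmul : (tri K r + seg K r) * ((2 * r * (K + 2) : ℕ) : ℝ) = Real.pi := by
    rw [hts]; exact div_mul_cancel₀ _ h0
  have haR : (aN K r x : ℝ) ≤ ((2 * r * (K + 2) : ℕ) : ℝ) := by exact_mod_cast haN2
  have hbR : (bN K r x : ℝ) ≤ ((2 * r * (K + 2) : ℕ) : ℝ) := by exact_mod_cast hbN
  rw [gR]
  nlinarith [haR, hbR, hseg, htri, hmul]

lemma opt_iff {K r : ℕ} (hr : 2 ≤ r) (x : Solution K) :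
    fitness r x = 1 ↔ gR K r x = 0 := by
  rw [fitness_eq hr]
  have hπ : Real.pi ≠ 0 := Real.pi_ne_zero
  constructor
  · intro h
    have : gR K r x / Real.pi = 0 := by linarith
    rcases div_eq_zero_iff.mp this with h' | h'
    · exact h'
    · exact absurd h' hπ
  · intro h; rw [h]; simp

lemma gR_lb {K r : ℕ} (hr : 2 ≤ r) (x : Solution K) (h : gR K r x ≠ 0) :
    seg K r ≤ gR K r x := by
  have hseg := seg_pos (K := K) hr
  have htri := tri_pos' (K := K) hr
  have hst := seg_le_tri' (K := K) (r := r) hr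
  by_cases ha : aN K r x = 0
  · by_cases hb : bN K r x = 0
    · exfalso; apply h; rw [gR, ha, hb]; simp
    · have : (1:ℝ) ≤ (bN K r x : ℝ) := by
        have : 1 ≤ bN K r x := Nat.one_le_iff_ne_zero.mpr hb
        exact_mod_cast this
      have h4 : (0:ℝ) ≤ (aN K r x : ℝ) := Nat.cast_nonneg _
      rw [gR]; nlinarith
  · have : (1:ℝ) ≤ (aN K r x : ℝ) := by
      have : 1 ≤ aN K r x := Nat.one_le_iff_ne_zero.mpr ha
      exact_mod_cast this
    have h4 : (0:ℝ) ≤ (bN K r x : ℝ) := Nat.cast_nonneg _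
    rw [gR]; nlinarith

/- gR bounded by indicator sum -/
lemma gR_le_sum {K r : ℕ} (hr : 2 ≤ r) (x : Solution K) :
    gR K r x ≤ (2 * r : ℝ) *
      ((∑ m, (tri K r * (if Iterm r (x m) < 2 * r then (1:ℝ) else 0)
        + seg K r * (if Jterm r (x m) < 2 * r then (1:ℝ) else 0)))
        + seg K r * (if 0 < eD r (x (Fin.last K)) then (1:ℝ) else 0)) := by
  have hseg := seg_pos (K := K) hr
  have htri := tri_pos' (K := K) hr
  have haR : (aN K r x : ℝ) ≤ ∑ m, (2 * r : ℝ) * (if Iterm r (x m) < 2 * r then (1:ℝ) else 0) := by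
    rw [aN]
    push_cast
    apply Finset.sum_le_sum
    intro m _
    have h1 := Iterm_le r (x m)
    split_ifs with h2
    · have : (2 * r - Iterm r (x m) : ℕ) ≤ 2 * r := by omega
      calc ((2 * r - Iterm r (x m) : ℕ) : ℝ) ≤ ((2 * r : ℕ) : ℝ) := by exact_mod_cast this
        _ = (2 * r : ℝ) * 1 := by push_cast; ring
    · have : (2 * r - Iterm r (x m) : ℕ) = 0 := by omega
      rw [this]; simp
  have hjR : (jN K r x : ℝ) ≤ ∑ m, (2 * r : ℝ) * (if Jterm r (x m) < 2 * r then (1:ℝ) else 0) := by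
    rw [jN]
    push_cast
    apply Finset.sum_le_sum
    intro m _
    have h1 := Jterm_le r (x m)
    split_ifs with h2
    · have : (2 * r - Jterm r (x m) : ℕ) ≤ 2 * r := by omega
      calc ((2 * r - Jterm r (x m) : ℕ) : ℝ) ≤ ((2 * r : ℕ) : ℝ) := by exact_mod_cast this
        _ = (2 * r : ℝ) * 1 := by push_cast; ring
    · have : (2 * r - Jterm r (x m) : ℕ) = 0 := by omega
      rw [this]; simp
  have heR : (eD r (x (Fin.last K)) : ℝ)
      ≤ (2 * r : ℝ) * (if 0 < eD r (x (Fin.last K)) then (1:ℝ) else 0) := by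
    have h1 := eD_le r (x (Fin.last K))
    split_ifs with h2
    · have : eD r (x (Fin.last K)) ≤ 2 * r := by omega
      calc (eD r (x (Fin.last K)) : ℝ) ≤ ((2 * r : ℕ) : ℝ) := by exact_mod_cast this
        _ = (2 * r : ℝ) * 1 := by push_cast; ring
    · have : eD r (x (Fin.last K)) = 0 := by omega
      rw [this]; simp
  have hbR : (bN K r x : ℝ) = (jN K r x : ℝ) + (eD r (x (Fin.last K)) : ℝ) := by
    rw [bN]; push_cast; ring
  rw [gR, hbR]
  have expand : (2 * r : ℝ) *
      ((∑ m, (tri K r * (if Iterm r (x m) < 2 * r then (1:ℝ) else 0)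
        + seg K r * (if Jterm r (x m) < 2 * r then (1:ℝ) else 0)))
        + seg K r * (if 0 < eD r (x (Fin.last K)) then (1:ℝ) else 0))
      = tri K r * (∑ m, (2 * r : ℝ) * (if Iterm r (x m) < 2 * r then (1:ℝ) else 0))
        + seg K r * (∑ m, (2 * r : ℝ) * (if Jterm r (x m) < 2 * r then (1:ℝ) else 0))
        + seg K r * ((2 * r : ℝ) * (if 0 < eD r (x (Fin.last K)) then (1:ℝ) else 0)) := by
    rw [Finset.sum_add_distrib, ← Finset.mul_sum, ← Finset.mul_sum, ← Finset.mul_sum, ← Finset.mul_sum]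
    ring
  rw [expand]
  nlinarith [haR, hjR, heR, hseg, htri]

end ENASP
namespace ENASP
open ENAS

open scoped ENNReal Classical in
lemma exp_bind {α β : Type} (p : PMF α) (q : α → PMF β) (φ : β → ℝ≥0∞) :
    ∑' b, (p.bind q) b * φ b = ∑' a, p a * ∑' b, (q a) b * φ b := by
  simp only [PMF.bind_apply]
  calc ∑' b, (∑' a, p a * (q a) b) * φ b
      = ∑' b, ∑' a, p a * (q a) b * φ b := by
        refine tsum_congr fun b => ?_
        rw [ENNReal.tsum_mul_right]
    _ = ∑' a, ∑' b, p a * (q a) b * φ b := ENNReal.tsum_comm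
    _ = ∑' a, p a * ∑' b, (q a) b * φ b := by
        refine tsum_congr fun a => ?_
        rw [← ENNReal.tsum_mul_left]
        exact tsum_congr fun b => by ring

open scoped ENNReal Classical in
lemma exp_pure {α : Type} (a : α) (φ : α → ℝ≥0∞) :
    ∑' b, (PMF.pure a) b * φ b = φ a := by
  have h : ∀ b, (PMF.pure a : PMF α) b * φ b = if b = a then φ a else 0 := by
    intro b
    rw [PMF.pure_apply]
    split_ifs with h
    · subst h; simp
    · simp
  rw [tsum_congr h, tsum_ite_eq]

open scoped ENNReal Classical in
lemma exp_map {α β : Type} (f : α → β) (p : PMF α) (φ : β → ℝ≥0∞) :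
    ∑' b, (p.map f) b * φ b = ∑' a, p a * φ (f a) := by
  rw [PMF.map, exp_bind]
  exact tsum_congr fun a => by rw [Function.comp_apply, exp_pure]

end ENASP
namespace ENASP
open ENAS
open scoped ENNReal

lemma le3 {a b c : ℝ≥0∞} : a ≤ a + b + c := le_trans le_self_add le_self_add
lemma mid3 {a b c : ℝ≥0∞} : b ≤ a + b + c := le_trans le_add_self le_self_add
lemma ri3 {a b c : ℝ≥0∞} : c ≤ a + b + c := le_add_self

open scoped Classical in
lemma exp_once (c : Cell) (φ : Cell → ℝ≥0∞) :
    (3:ℝ≥0∞)⁻¹ * ((3:ℝ≥0∞)⁻¹ * (φ (cA c) + (2:ℝ≥0∞)⁻¹ * (if 0 < c 1 then φ (cE c) else 0)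
        + φ (cC c)))
      ≤ ∑' d, (mutateCellOnce c) d * φ d := by
  rw [mutateCellOnce, exp_bind, tsum_fintype, Fin.sum_univ_three]
  simp only [PMF.uniformOfFintype_apply, Fintype.card_fin, Nat.cast_ofNat]
  -- branch V = 0 : addition gives cA
  have e0 : (3:ℝ≥0∞)⁻¹ * φ (cA c)
      ≤ ∑' b, ((PMF.uniformOfFintype (Fin 3)).bind fun op =>
          if op = 0 then PMF.pure (Function.update c 0 (c 0 + 1))
          else if op = 1 then
            PMF.pure (if 0 < c 0 then Function.update c 0 (c 0 - 1) else c)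
          else
            (PMF.uniformOfFinset (Finset.univ.erase 0) (by
                rw [← Finset.card_pos, Finset.card_erase_of_mem (Finset.mem_univ _)]
                simp)).bind fun W =>
              PMF.pure
                (if 0 < c 0 then
                  Function.update (Function.update c 0 (c 0 - 1)) W (c W + 1)
                else c)) b * φ b := by
    rw [exp_bind, tsum_fintype, Fin.sum_univ_three]
    simp only [PMF.uniformOfFintype_apply, Fintype.card_fin, Nat.cast_ofNat,
      eq_self_iff_true, if_true]
    rw [exp_pure]
    exact le3
  -- branch V = 2 : addition gives cC
  have e2 : (3:ℝ≥0∞)⁻¹ * φ (cC c)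
      ≤ ∑' b, ((PMF.uniformOfFintype (Fin 3)).bind fun op =>
          if op = 0 then PMF.pure (Function.update c 2 (c 2 + 1))
          else if op = 1 then
            PMF.pure (if 0 < c 2 then Function.update c 2 (c 2 - 1) else c)
          else
            (PMF.uniformOfFinset (Finset.univ.erase 2) (by
                rw [← Finset.card_pos, Finset.card_erase_of_mem (Finset.mem_univ _)]
                simp)).bind fun W =>
              PMF.pure
                (if 0 < c 2 then
                  Function.update (Function.update c 2 (c 2 - 1)) W (c W + 1)
                else c)) b * φ b := by
    rw [exp_bind, tsum_fintype, Fin.sum_univ_three]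
    simp only [PMF.uniformOfFintype_apply, Fintype.card_fin, Nat.cast_ofNat,
      eq_self_iff_true, if_true]
    rw [exp_pure]
    exact le3
  -- branch V = 1, op = 2, W = 2 : modification B → C gives cE
  have e1 : (3:ℝ≥0∞)⁻¹ * ((2:ℝ≥0∞)⁻¹ * (if 0 < c 1 then φ (cE c) else 0))
      ≤ ∑' b, ((PMF.uniformOfFintype (Fin 3)).bind fun op =>
          if op = 0 then PMF.pure (Function.update c 1 (c 1 + 1))
          else if op = 1 then
            PMF.pure (if 0 < c 1 then Function.update c 1 (c 1 - 1) else c)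
          else
            (PMF.uniformOfFinset (Finset.univ.erase 1) (by
                rw [← Finset.card_pos, Finset.card_erase_of_mem (Finset.mem_univ _)]
                simp)).bind fun W =>
              PMF.pure
                (if 0 < c 1 then
                  Function.update (Function.update c 1 (c 1 - 1)) W (c W + 1)
                else c)) b * φ b := by
    rw [exp_bind, tsum_fintype, Fin.sum_univ_three]
    simp only [PMF.uniformOfFintype_apply, Fintype.card_fin, Nat.cast_ofNat,
      eq_self_iff_true, if_true]
    rw [if_neg (by decide : ¬ ((2:Fin 3) = 0)), if_neg (by decide : ¬ ((2:Fin 3) = 1))]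
    refine le_trans ?_ (ri3 (a := _) (b := _))
    gcongr
    rw [exp_bind]
    have hterm : ((2:ℝ≥0∞)⁻¹ * (if 0 < c 1 then φ (cE c) else 0))
        ≤ (PMF.uniformOfFinset (Finset.univ.erase (1:Fin 3)) (by
                rw [← Finset.card_pos, Finset.card_erase_of_mem (Finset.mem_univ _)]
                simp)) 2 * ∑' b, (PMF.pure
                (if 0 < c 1 then
                  Function.update (Function.update c 1 (c 1 - 1)) (2:Fin 3) (c 2 + 1)
                else c)) b * φ b := by
      rw [exp_pure, PMF.uniformOfFinset_apply, if_pos (by decide : (2:Fin 3) ∈ Finset.univ.erase 1)]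
      have hcard : (Finset.univ.erase (1:Fin 3)).card = 2 := by decide
      rw [hcard]
      split_ifs with h
      · rw [cE]; norm_num
      · simp
    exact le_trans hterm (ENNReal.le_tsum 2)
  calc (3:ℝ≥0∞)⁻¹ * ((3:ℝ≥0∞)⁻¹ * (φ (cA c)
          + (2:ℝ≥0∞)⁻¹ * (if 0 < c 1 then φ (cE c) else 0) + φ (cC c)))
      = (3:ℝ≥0∞)⁻¹ * ((3:ℝ≥0∞)⁻¹ * φ (cA c))
        + (3:ℝ≥0∞)⁻¹ * ((3:ℝ≥0∞)⁻¹ * ((2:ℝ≥0∞)⁻¹ * (if 0 < c 1 then φ (cE c) else 0)))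
        + (3:ℝ≥0∞)⁻¹ * ((3:ℝ≥0∞)⁻¹ * φ (cC c)) := by ring
    _ ≤ _ := by gcongr

end ENASP
namespace ENASP
open ENAS
open scoped ENNReal

lemma poisson_one : (ProbabilityTheory.poissonPMF 1) 1 = ENNReal.ofReal (Real.exp (-1)) := by
  show ENNReal.ofReal (ProbabilityTheory.poissonPMFReal 1 1) = _
  rw [ProbabilityTheory.poissonPMFReal]
  norm_num

lemma poisson_one_ge : (3:ℝ≥0∞)⁻¹ ≤ (ProbabilityTheory.poissonPMF 1) 1 := by
  rw [poisson_one]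
  have h3 : ((3:ℝ≥0∞))⁻¹ = ENNReal.ofReal (1/3) := by
    rw [ENNReal.ofReal_div_of_pos (by norm_num)]
    norm_num [ENNReal.ofReal_one]
  rw [h3]
  apply ENNReal.ofReal_le_ofReal
  rw [Real.exp_neg]
  have he : Real.exp 1 ≤ 3 := by
    have := Real.exp_one_lt_d9
    linarith
  have hp : 0 < Real.exp 1 := Real.exp_pos 1
  rw [one_div, inv_le_inv₀ (by norm_num) hp]
  exact he

open scoped Classical in
lemma exp_inner (inner : Bool) (c : Cell) (φ : Cell → ℝ≥0∞) :
    (3:ℝ≥0∞)⁻¹ * ((3:ℝ≥0∞)⁻¹ * ((3:ℝ≥0∞)⁻¹ * (φ (cA c)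
        + (2:ℝ≥0∞)⁻¹ * (if 0 < c 1 then φ (cE c) else 0) + φ (cC c))))
      ≤ ∑' d, (innerMutate inner c) d * φ d := by
  cases inner
  · -- local
    rw [innerMutate]
    simp only [Bool.false_eq_true, if_false]
    refine le_trans ?_ (exp_once c φ)
    exact mul_le_of_le_one_left (zero_le) (ENNReal.inv_le_one.mpr (by norm_num))
  · -- global
    rw [innerMutate]
    simp only [if_true]
    rw [exp_bind]
    have h1 : ∑' d, (mutateCellTimes 1 c) d * φ d = ∑' d, (mutateCellOnce c) d * φ d := by
      show ∑' d, ((mutateCellOnce c).bind (mutateCellTimes 0)) d * φ d = _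
      rw [exp_bind]
      refine tsum_congr fun a => ?_
      congr 1
      show ∑' d, (PMF.pure a) d * φ d = φ a
      exact exp_pure a φ
    calc (3:ℝ≥0∞)⁻¹ * ((3:ℝ≥0∞)⁻¹ * ((3:ℝ≥0∞)⁻¹ * (φ (cA c)
            + (2:ℝ≥0∞)⁻¹ * (if 0 < c 1 then φ (cE c) else 0) + φ (cC c))))
        ≤ (ProbabilityTheory.poissonPMF 1) 1 * ((3:ℝ≥0∞)⁻¹ * ((3:ℝ≥0∞)⁻¹ * (φ (cA c)
            + (2:ℝ≥0∞)⁻¹ * (if 0 < c 1 then φ (cE c) else 0) + φ (cC c)))) := by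
          exact mul_le_mul_left poisson_one_ge _
      _ ≤ (ProbabilityTheory.poissonPMF 1) 1 * ∑' d, (mutateCellTimes 1 c) d * φ d := by
          rw [h1]; exact mul_le_mul_right (exp_once c φ) _
      _ ≤ ∑' k, (ProbabilityTheory.poissonPMF 1) k * ∑' d, (mutateCellTimes k c) d * φ d :=
          ENNReal.le_tsum 1

end ENASP
namespace ENASP
open ENAS
open scoped ENNReal

noncomputable def gE (K r : ℕ) (x : Solution K) : ℝ≥0∞ := ENNReal.ofReal (gR K r x)
noncomputable def del (K r : ℕ) : ℝ≥0∞ := ENNReal.ofReal (1 / (108 * r * (K + 1)))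

def indIr (r : ℕ) (c : Cell) : ℝ := if Iterm r c < 2 * r then 1 else 0
def indJr (r : ℕ) (c : Cell) : ℝ := if Jterm r c < 2 * r then 1 else 0
def indEr (r : ℕ) (c : Cell) : ℝ := if 0 < eD r c then 1 else 0

lemma indIr_nonneg (r : ℕ) (c : Cell) : 0 ≤ indIr r c := by
  rw [indIr]; split_ifs <;> norm_num
lemma indJr_nonneg (r : ℕ) (c : Cell) : 0 ≤ indJr r c := by
  rw [indJr]; split_ifs <;> norm_num
lemma indEr_nonneg (r : ℕ) (c : Cell) : 0 ≤ indEr r c := by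
  rw [indEr]; split_ifs <;> norm_num

lemma gR_le_sum' {K r : ℕ} (hr : 2 ≤ r) (x : Solution K) :
    gR K r x ≤ (2 * r : ℝ) *
      ((∑ m, (tri K r * indIr r (x m) + seg K r * indJr r (x m)))
        + seg K r * indEr r (x (Fin.last K))) := by
  simpa [indIr, indJr, indEr] using gR_le_sum hr x

lemma inv3_ofReal : (3:ℝ≥0∞)⁻¹ = ENNReal.ofReal (1/3) := by
  rw [ENNReal.ofReal_div_of_pos (by norm_num)]
  norm_num
lemma inv2_ofReal : (2:ℝ≥0∞)⁻¹ = ENNReal.ofReal (1/2) := by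
  rw [ENNReal.ofReal_div_of_pos (by norm_num)]
  norm_num
lemma invK_ofReal (K : ℕ) : (((K:ℝ≥0∞)) + 1)⁻¹ = ENNReal.ofReal (1/(K+1:ℝ)) := by
  have h1 : ((K:ℝ≥0∞) + 1) = ENNReal.ofReal ((K:ℝ) + 1) := by
    rw [ENNReal.ofReal_add (by positivity) (by norm_num), ENNReal.ofReal_natCast,
      ENNReal.ofReal_one]
  rw [h1, ← ENNReal.ofReal_inv_of_pos (by positivity), one_div]

open scoped Classical in
lemma psi_lb {K r : ℕ} (hr : 2 ≤ r) (x y : Solution K) (t : ℝ) (ht : 0 ≤ t)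
    (hacc : gR K r y + t ≤ gR K r x) :
    ENNReal.ofReal t ≤ gE K r x - gE K r (if fitness r x ≤ fitness r y then y else x) := by
  have hy : gR K r y ≤ gR K r x := by linarith
  rw [if_pos ((fitness_le_iff hr x y).mpr hy)]
  rw [gE, gE, ← ENNReal.ofReal_sub _ (gR_nonneg hr y)]
  exact ENNReal.ofReal_le_ofReal (by linarith)

open scoped Classical in
lemma exp_phi {K r : ℕ} (hr : 2 ≤ r) (inner : Bool) (x : Solution K) :
    del K r * gE K r x ≤
      ∑' y, (offspringOneBit inner x) y
        * (gE K r x - gE K r (if fitness r x ≤ fitness r y then y else x)) := by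
  have hseg := seg_pos (K := K) hr
  have htri := tri_pos' (K := K) hr
  set ψ : Solution K → ℝ≥0∞ :=
    fun y => gE K r x - gE K r (if fitness r x ≤ fitness r y then y else x) with hψ
  have hm : ∀ m : Fin (K+1),
      ENNReal.ofReal ((1/54) * (seg K r * indJr r (x m) + tri K r * indIr r (x m)
          + (if m = Fin.last K then seg K r * indEr r (x (Fin.last K)) else 0)))
        ≤ ∑' c, (innerMutate inner (x m)) c * ψ (Function.update x m c) := by
    intro m
    have hA : ENNReal.ofReal (seg K r * indJr r (x m)) ≤ ψ (Function.update x m (cA (x m))) :=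
      psi_lb hr x _ _ (mul_nonneg (le_of_lt hseg) (indJr_nonneg r (x m))) (by
        have h := gR_A hr x m
        rw [indJr]; linarith [h])
    have hC : ENNReal.ofReal (tri K r * indIr r (x m)) ≤ ψ (Function.update x m (cC (x m))) :=
      psi_lb hr x _ _ (mul_nonneg (le_of_lt htri) (indIr_nonneg r (x m))) (by
        have h := gR_C hr x m
        rw [indIr]; linarith [h])
    have hE : ENNReal.ofReal (if m = Fin.last K then seg K r * indEr r (x (Fin.last K)) else 0)
        ≤ (if 0 < (x m) 1 then ψ (Function.update x m (cE (x m))) else 0) := by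
      by_cases hml : m = Fin.last K
      · subst hml
        rw [if_pos rfl]
        by_cases heD : 0 < eD r (x (Fin.last K))
        · rw [if_pos (eD_pos_B r _ heD)]
          have hE1 : indEr r (x (Fin.last K)) = 1 := by rw [indEr, if_pos heD]
          rw [hE1, mul_one]
          exact psi_lb hr x _ _ (le_of_lt hseg) (gR_E hr x heD)
        · have hE0 : indEr r (x (Fin.last K)) = 0 := by rw [indEr, if_neg heD]
          rw [hE0, mul_zero, ENNReal.ofReal_zero]
          exact zero_le
      · rw [if_neg hml, ENNReal.ofReal_zero]
        exact zero_le
    refine le_trans ?_ (exp_inner inner (x m) (fun c => ψ (Function.update x m c)))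
    have hsplit : ENNReal.ofReal ((1/54) * (seg K r * indJr r (x m) + tri K r * indIr r (x m)
          + (if m = Fin.last K then seg K r * indEr r (x (Fin.last K)) else 0)))
        = (3:ℝ≥0∞)⁻¹ * ((3:ℝ≥0∞)⁻¹ * ((3:ℝ≥0∞)⁻¹ * ((2:ℝ≥0∞)⁻¹ *
            (ENNReal.ofReal (seg K r * indJr r (x m)) + ENNReal.ofReal (tri K r * indIr r (x m))
              + ENNReal.ofReal (if m = Fin.last K then seg K r * indEr r (x (Fin.last K)) else 0))))) := by
      have h1 : (0:ℝ) ≤ seg K r * indJr r (x m) :=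
        mul_nonneg (le_of_lt hseg) (indJr_nonneg r (x m))
      have h2 : (0:ℝ) ≤ tri K r * indIr r (x m) :=
        mul_nonneg (le_of_lt htri) (indIr_nonneg r (x m))
      have h3 : (0:ℝ) ≤ (if m = Fin.last K then seg K r * indEr r (x (Fin.last K)) else 0) := by
        split_ifs
        · exact mul_nonneg (le_of_lt hseg) (indEr_nonneg r (x (Fin.last K)))
        · exact le_refl 0
      rw [inv3_ofReal, inv2_ofReal]
      rw [← ENNReal.ofReal_add h1 h2, ← ENNReal.ofReal_add (by linarith) h3]
      rw [← ENNReal.ofReal_mul (by norm_num), ← ENNReal.ofReal_mul (by norm_num),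
        ← ENNReal.ofReal_mul (by norm_num), ← ENNReal.ofReal_mul (by norm_num)]
      congr 1
      ring
    rw [hsplit]
    gcongr
    have expand : (2:ℝ≥0∞)⁻¹ *
          (ENNReal.ofReal (seg K r * indJr r (x m)) + ENNReal.ofReal (tri K r * indIr r (x m))
            + ENNReal.ofReal (if m = Fin.last K then seg K r * indEr r (x (Fin.last K)) else 0))
        = 2⁻¹ * ENNReal.ofReal (seg K r * indJr r (x m))
          + 2⁻¹ * ENNReal.ofReal (if m = Fin.last K then seg K r * indEr r (x (Fin.last K)) else 0)
          + 2⁻¹ * ENNReal.ofReal (tri K r * indIr r (x m)) := by ring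
    rw [expand]
    have half_le : ∀ a : ℝ≥0∞, (2:ℝ≥0∞)⁻¹ * a ≤ a := fun a =>
      mul_le_of_le_one_left (zero_le) (ENNReal.inv_le_one.mpr (by norm_num))
    gcongr
    · exact le_trans (half_le _) hA
    · exact le_trans (half_le _) hC
  -- now assemble
  have hrw : ∑' y, (offspringOneBit inner x) y * ψ y
      = ∑ m : Fin (K+1), (((K:ℝ≥0∞)) + 1)⁻¹ *
          ∑' c, (innerMutate inner (x m)) c * ψ (Function.update x m c) := by
    rw [offspringOneBit, exp_bind, tsum_fintype]
    refine Finset.sum_congr rfl fun m _ => ?_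
    rw [PMF.uniformOfFintype_apply, Fintype.card_fin]
    push_cast
    congr 1
    rw [exp_bind]
    exact tsum_congr fun c => by rw [exp_pure]
  rw [hrw]
  calc del K r * gE K r x
      ≤ ENNReal.ofReal ((1/(K+1:ℝ)) * ((1/54) *
          ((∑ m, (seg K r * indJr r (x m) + tri K r * indIr r (x m)))
            + seg K r * indEr r (x (Fin.last K))))) := by
        rw [del, gE, ← ENNReal.ofReal_mul (by positivity)]
        apply ENNReal.ofReal_le_ofReal
        have hS := gR_le_sum' hr x
        have hr0 : (0:ℝ) < r := by exact_mod_cast lt_of_lt_of_le (by norm_num) hr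
        have hK0 : (0:ℝ) < (K:ℝ) + 1 := by positivity
        have hSnn : (0:ℝ) ≤ (∑ m, (tri K r * indIr r (x m) + seg K r * indJr r (x m)))
            + seg K r * indEr r (x (Fin.last K)) := by
          have : ∀ m ∈ Finset.univ, (0:ℝ) ≤ tri K r * indIr r (x m) + seg K r * indJr r (x m) :=
            fun m _ => add_nonneg (mul_nonneg (le_of_lt htri) (indIr_nonneg r (x m)))
              (mul_nonneg (le_of_lt hseg) (indJr_nonneg r (x m)))
          have hs := Finset.sum_nonneg this
          have he := mul_nonneg (le_of_lt hseg) (indEr_nonneg r (x (Fin.last K)))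
          linarith
        have hcoef : (1 / (108 * (r:ℝ) * (K + 1))) * ((2 * r : ℝ) *
            ((∑ m, (tri K r * indIr r (x m) + seg K r * indJr r (x m)))
              + seg K r * indEr r (x (Fin.last K))))
            = (1/(K+1:ℝ)) * ((1/54) *
              ((∑ m, (seg K r * indJr r (x m) + tri K r * indIr r (x m)))
                + seg K r * indEr r (x (Fin.last K)))) := by
          have hsum : (∑ m, (tri K r * indIr r (x m) + seg K r * indJr r (x m)))
              = ∑ m, (seg K r * indJr r (x m) + tri K r * indIr r (x m)) := by
            exact Finset.sum_congr rfl fun m _ => by ring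
          rw [hsum]
          field_simp
          ring
        calc (1 / (108 * (r:ℝ) * (K + 1))) * gR K r x
            ≤ (1 / (108 * (r:ℝ) * (K + 1))) * ((2 * r : ℝ) *
              ((∑ m, (tri K r * indIr r (x m) + seg K r * indJr r (x m)))
                + seg K r * indEr r (x (Fin.last K)))) := by
              apply mul_le_mul_of_nonneg_left hS
              positivity
          _ = _ := hcoef
    _ = (((K:ℝ≥0∞)) + 1)⁻¹ * ENNReal.ofReal ((1/54) *
          ((∑ m, (seg K r * indJr r (x m) + tri K r * indIr r (x m)))
            + seg K r * indEr r (x (Fin.last K)))) := by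
        rw [invK_ofReal, ← ENNReal.ofReal_mul (by positivity)]
    _ = (((K:ℝ≥0∞)) + 1)⁻¹ * ∑ m : Fin (K+1), ENNReal.ofReal ((1/54) *
          (seg K r * indJr r (x m) + tri K r * indIr r (x m)
            + (if m = Fin.last K then seg K r * indEr r (x (Fin.last K)) else 0))) := by
        congr 1
        rw [← ENNReal.ofReal_sum_of_nonneg]
        · rw [← Finset.mul_sum]
          congr 1
          have hi : ∑ i : Fin (K+1),
              (if i = Fin.last K then seg K r * indEr r (x (Fin.last K)) else 0)
              = seg K r * indEr r (x (Fin.last K)) := by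
            rw [Finset.sum_ite_eq' Finset.univ (Fin.last K)
              (fun _ => seg K r * indEr r (x (Fin.last K)))]
            exact if_pos (Finset.mem_univ _)
          rw [Finset.sum_add_distrib, Finset.sum_add_distrib, hi, Finset.sum_add_distrib]
        · intro m _
          have h3 : (0:ℝ) ≤ (if m = Fin.last K then seg K r * indEr r (x (Fin.last K)) else 0) := by
            split_ifs
            · exact mul_nonneg (le_of_lt hseg) (indEr_nonneg r (x (Fin.last K)))
            · exact le_refl 0
          have h1 : (0:ℝ) ≤ seg K r * indJr r (x m) :=
            mul_nonneg (le_of_lt hseg) (indJr_nonneg r (x m))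
          have h2 : (0:ℝ) ≤ tri K r * indIr r (x m) :=
            mul_nonneg (le_of_lt htri) (indIr_nonneg r (x m))
          nlinarith
    _ ≤ ∑ m : Fin (K+1), (((K:ℝ≥0∞)) + 1)⁻¹ *
          ∑' c, (innerMutate inner (x m)) c * ψ (Function.update x m c) := by
        rw [Finset.mul_sum]
        exact Finset.sum_le_sum fun m _ => mul_le_mul_right (hm m) _
end ENASP
namespace ENASP
open ENAS
open scoped ENNReal

open scoped Classical in
lemma drift {K r : ℕ} (hr : 2 ≤ r) (inner : Bool) (x : Solution K) :
    ∑' y, (step r (offspringOneBit inner) x) y * gE K r y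
      ≤ (1 - del K r) * gE K r x := by
  have hstep : ∑' y, (step r (offspringOneBit inner) x) y * gE K r y
      = ∑' y, (offspringOneBit inner x) y
          * gE K r (if fitness r x ≤ fitness r y then y else x) := by
    rw [step, exp_map]
  rw [hstep]
  have hle : ∀ y : Solution K,
      gE K r (if fitness r x ≤ fitness r y then y else x) ≤ gE K r x := by
    intro y
    split_ifs with h
    · exact ENNReal.ofReal_le_ofReal ((fitness_le_iff hr x y).mp h)
    · exact le_rfl
  have key1 : (∑' y, (offspringOneBit inner x) y
        * gE K r (if fitness r x ≤ fitness r y then y else x))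
      + (∑' y, (offspringOneBit inner x) y
        * (gE K r x - gE K r (if fitness r x ≤ fitness r y then y else x)))
      = gE K r x := by
    rw [← ENNReal.tsum_add]
    have hpt : ∀ y : Solution K,
        (offspringOneBit inner x) y * gE K r (if fitness r x ≤ fitness r y then y else x)
          + (offspringOneBit inner x) y
            * (gE K r x - gE K r (if fitness r x ≤ fitness r y then y else x))
        = (offspringOneBit inner x) y * gE K r x := fun y => by
      rw [← mul_add, add_tsub_cancel_of_le (hle y)]
    rw [tsum_congr hpt, ENNReal.tsum_mul_right, PMF.tsum_coe, one_mul]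
  have key2 := exp_phi hr inner x
  have h3 : (∑' y, (offspringOneBit inner x) y
        * gE K r (if fitness r x ≤ fitness r y then y else x)) + del K r * gE K r x
      ≤ gE K r x := by
    calc (∑' y, (offspringOneBit inner x) y
          * gE K r (if fitness r x ≤ fitness r y then y else x)) + del K r * gE K r x
        ≤ (∑' y, (offspringOneBit inner x) y
            * gE K r (if fitness r x ≤ fitness r y then y else x))
          + (∑' y, (offspringOneBit inner x) y
            * (gE K r x - gE K r (if fitness r x ≤ fitness r y then y else x))) :=
          add_le_add_right key2 _
      _ = gE K r x := key1
  have hgtop : del K r * gE K r x ≠ ⊤ := by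
    rw [del, gE]
    exact ENNReal.mul_ne_top ENNReal.ofReal_ne_top ENNReal.ofReal_ne_top
  have h4 := ENNReal.le_sub_of_add_le_right hgtop h3
  have h5 : (1 - del K r) * gE K r x = gE K r x - del K r * gE K r x := by
    rw [ENNReal.sub_mul (fun _ _ => by rw [gE]; exact ENNReal.ofReal_ne_top), one_mul]
  rw [h5]
  exact h4

noncomputable def EG (K r : ℕ) (off : Solution K → PMF (Solution K))
    (init : PMF (Solution K)) (t : ℕ) : ℝ≥0∞ :=
  ∑' x, (solutionDist r off init t) x * gE K r x

lemma EG_succ {K r : ℕ} (hr : 2 ≤ r) (inner : Bool) (init : PMF (Solution K)) (t : ℕ) :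
    EG K r (offspringOneBit inner) init (t + 1)
      ≤ (1 - del K r) * EG K r (offspringOneBit inner) init t := by
  rw [EG, EG]
  show ∑' x, ((solutionDist r (offspringOneBit inner) init t).bind
      (step r (offspringOneBit inner))) x * gE K r x ≤ _
  rw [exp_bind]
  calc ∑' x, (solutionDist r (offspringOneBit inner) init t) x
        * ∑' y, (step r (offspringOneBit inner) x) y * gE K r y
      ≤ ∑' x, (solutionDist r (offspringOneBit inner) init t) x
        * ((1 - del K r) * gE K r x) :=
        ENNReal.tsum_le_tsum fun x => mul_le_mul_right (drift hr inner x) _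
    _ = (1 - del K r) * ∑' x, (solutionDist r (offspringOneBit inner) init t) x * gE K r x := by
        rw [← ENNReal.tsum_mul_left]
        exact tsum_congr fun x => by ring

lemma EG_zero {K r : ℕ} (hr : 2 ≤ r) (off : Solution K → PMF (Solution K))
    (init : PMF (Solution K)) :
    EG K r off init 0 ≤ ENNReal.ofReal Real.pi := by
  rw [EG]
  show ∑' x, init x * gE K r x ≤ _
  calc ∑' x, init x * gE K r x ≤ ∑' x, init x * ENNReal.ofReal Real.pi :=
      ENNReal.tsum_le_tsum fun x =>
        mul_le_mul_right (ENNReal.ofReal_le_ofReal (gR_le_pi hr x)) _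
    _ = ENNReal.ofReal Real.pi := by rw [ENNReal.tsum_mul_right, PMF.tsum_coe, one_mul]

lemma EG_le {K r : ℕ} (hr : 2 ≤ r) (inner : Bool) (init : PMF (Solution K)) (t : ℕ) :
    EG K r (offspringOneBit inner) init t ≤ (1 - del K r) ^ t * ENNReal.ofReal Real.pi := by
  induction t with
  | zero => simpa using EG_zero hr _ init
  | succ t ih =>
      calc EG K r (offspringOneBit inner) init (t + 1)
          ≤ (1 - del K r) * EG K r (offspringOneBit inner) init t := EG_succ hr inner init t
        _ ≤ (1 - del K r) * ((1 - del K r) ^ t * ENNReal.ofReal Real.pi) :=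
            mul_le_mul_right ih _
        _ = (1 - del K r) ^ (t + 1) * ENNReal.ofReal Real.pi := by ring

open scoped Classical in
lemma P_le {K r : ℕ} (hr : 2 ≤ r) (inner : Bool) (init : PMF (Solution K)) (t : ℕ) :
    (∑' x : Solution K, if fitness r x = 1 then 0
        else (solutionDist r (offspringOneBit inner) init t) x)
      ≤ (ENNReal.ofReal (seg K r))⁻¹ * ((1 - del K r) ^ t * ENNReal.ofReal Real.pi) := by
  have hs0 : ENNReal.ofReal (seg K r) ≠ 0 := by
    simp only [ne_eq, ENNReal.ofReal_eq_zero, not_le]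
    exact seg_pos hr
  have hstop : ENNReal.ofReal (seg K r) ≠ ⊤ := ENNReal.ofReal_ne_top
  calc (∑' x : Solution K, if fitness r x = 1 then 0
        else (solutionDist r (offspringOneBit inner) init t) x)
      ≤ ∑' x : Solution K, (ENNReal.ofReal (seg K r))⁻¹
          * ((solutionDist r (offspringOneBit inner) init t) x * gE K r x) := by
        apply ENNReal.tsum_le_tsum
        intro x
        split_ifs with h
        · exact zero_le
        · have hgR : seg K r ≤ gR K r x := gR_lb hr x (fun h0 => h ((opt_iff hr x).mpr h0))
          have hge : ENNReal.ofReal (seg K r) ≤ gE K r x := ENNReal.ofReal_le_ofReal hgR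
          calc (solutionDist r (offspringOneBit inner) init t) x
              = (ENNReal.ofReal (seg K r))⁻¹ * (ENNReal.ofReal (seg K r)
                * (solutionDist r (offspringOneBit inner) init t) x) := by
                rw [← mul_assoc, ENNReal.inv_mul_cancel hs0 hstop, one_mul]
            _ ≤ (ENNReal.ofReal (seg K r))⁻¹
                * ((solutionDist r (offspringOneBit inner) init t) x * gE K r x) := by
                rw [mul_comm (ENNReal.ofReal (seg K r))]
                exact mul_le_mul_right (mul_le_mul_right hge _) _
    _ = (ENNReal.ofReal (seg K r))⁻¹ * EG K r (offspringOneBit inner) init t := by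
        rw [ENNReal.tsum_mul_left]; rfl
    _ ≤ (ENNReal.ofReal (seg K r))⁻¹ * ((1 - del K r) ^ t * ENNReal.ofReal Real.pi) :=
        mul_le_mul_right (EG_le hr inner init t) _

open scoped Classical in
lemma P_le_one {K r : ℕ} (inner : Bool) (init : PMF (Solution K)) (t : ℕ) :
    (∑' x : Solution K, if fitness r x = 1 then 0
        else (solutionDist r (offspringOneBit inner) init t) x) ≤ 1 := by
  calc (∑' x : Solution K, if fitness r x = 1 then 0
        else (solutionDist r (offspringOneBit inner) init t) x)
      ≤ ∑' x : Solution K, (solutionDist r (offspringOneBit inner) init t) x :=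
        ENNReal.tsum_le_tsum fun x => by split_ifs <;> simp
    _ = 1 := PMF.tsum_coe _

lemma tsum_shift (f : ℕ → ℝ≥0∞) (k : ℕ) :
    ∑' t, f t = (∑ i ∈ Finset.range k, f i) + ∑' i, f (i + k) := by
  induction k with
  | zero => simp
  | succ k ih =>
      rw [ih, Finset.sum_range_succ]
      have h1 : ∑' i, f (i + k) = f k + ∑' i, f (i + (k + 1)) := by
        rw [tsum_eq_zero_add' ENNReal.summable]
        simp only [zero_add]
        congr 1
        exact tsum_congr fun i => by ring_nf
      rw [h1]
      ring

end ENASP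
namespace ENASP
open ENAS
open scoped ENNReal

open scoped Classical in
theorem main_bound {K r : ℕ} (hr : 2 ≤ r) (inner : Bool) (init : PMF (Solution K)) :
    (∑' t : ℕ, ∑' x : Solution K, if fitness r x = 1 then 0
        else (solutionDist r (offspringOneBit inner) init t) x)
      ≤ ENNReal.ofReal (800 * (r:ℝ) * ((K:ℝ) + 2) * Real.log ((r:ℝ) * ((K:ℝ) + 2))) := by
  have hseg := seg_pos (K := K) hr
  have hπ := Real.pi_pos
  set δr : ℝ := 1 / (108 * (r:ℝ) * ((K:ℝ) + 1)) with hδr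
  have hr0 : (0:ℝ) < (r:ℝ) := by exact_mod_cast lt_of_lt_of_le (by norm_num) hr
  have hK0 : (0:ℝ) ≤ (K:ℝ) := Nat.cast_nonneg K
  have hδr0 : 0 < δr := by rw [hδr]; positivity
  have hδr1 : δr ≤ 1 := by
    have hr2 : (2:ℝ) ≤ (r:ℝ) := by exact_mod_cast hr
    rw [hδr, div_le_one (by positivity)]
    nlinarith
  have hdel : del K r = ENNReal.ofReal δr := rfl
  have hratio : (1:ℝ) ≤ Real.pi / seg K r := by
    rw [le_div_iff₀ hseg]
    have h1 := segR_le (hn8 (K := K) (r := r) hr)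
    have hn1 : (1:ℝ) ≤ ((2 * r * (K + 2) : ℕ) : ℝ) := by
      have := hn8 (K := K) (r := r) hr; linarith
    calc 1 * seg K r = seg K r := one_mul _
      _ ≤ Real.pi / ((2 * r * (K + 2) : ℕ) : ℝ) := h1
      _ ≤ Real.pi := by
          rw [div_le_iff₀ (by linarith)]
          nlinarith
  set L : ℝ := Real.log (Real.pi / seg K r) with hL
  have hL0 : 0 ≤ L := Real.log_nonneg hratio
  set T0 : ℕ := Nat.ceil (L / δr) with hT0
  -- real geometric bound
  have hkey : (1 - δr) ^ T0 * Real.pi ≤ seg K r := by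
    have h1d : 0 ≤ 1 - δr := by linarith
    have hexp : (1 - δr) ^ T0 ≤ Real.exp (-(δr * T0)) := by
      calc (1 - δr) ^ T0 ≤ (Real.exp (-δr)) ^ T0 := by
            apply pow_le_pow_left₀ h1d
            linarith [Real.add_one_le_exp (-δr)]
        _ = Real.exp (-(δr * T0)) := by
            rw [← Real.exp_nat_mul]
            ring_nf
    have hT0L : L ≤ δr * T0 := by
      have h1 : L / δr ≤ (T0:ℝ) := Nat.le_ceil _
      calc L = δr * (L / δr) := by field_simp
        _ ≤ δr * T0 := by nlinarith
    have hexp2 : Real.exp (-(δr * T0)) ≤ Real.exp (-L) := Real.exp_le_exp.mpr (by linarith)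
    have hexpL : Real.exp (-L) = seg K r / Real.pi := by
      rw [hL, Real.exp_neg, Real.exp_log (by positivity), inv_div]
    have hfin : (1 - δr) ^ T0 ≤ seg K r / Real.pi := by
      calc (1 - δr) ^ T0 ≤ Real.exp (-(δr * T0)) := hexp
        _ ≤ Real.exp (-L) := hexp2
        _ = seg K r / Real.pi := hexpL
    calc (1 - δr) ^ T0 * Real.pi ≤ (seg K r / Real.pi) * Real.pi :=
          mul_le_mul_of_nonneg_right hfin (le_of_lt hπ)
      _ = seg K r := by field_simp
  -- ENNReal facts
  have h1d : (0:ℝ) ≤ 1 - δr := by linarith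
  have hc : (1:ℝ≥0∞) - del K r = ENNReal.ofReal (1 - δr) := by
    rw [hdel, ENNReal.ofReal_sub 1 (le_of_lt hδr0), ENNReal.ofReal_one]
  have hs0 : ENNReal.ofReal (seg K r) ≠ 0 := by
    simp only [ne_eq, ENNReal.ofReal_eq_zero, not_le]; exact hseg
  have hstop : ENNReal.ofReal (seg K r) ≠ ⊤ := ENNReal.ofReal_ne_top
  have habs : (ENNReal.ofReal (seg K r))⁻¹ * ((1 - del K r) ^ T0 * ENNReal.ofReal Real.pi)
      ≤ 1 := by
    have h2 : (1 - del K r) ^ T0 * ENNReal.ofReal Real.pi ≤ ENNReal.ofReal (seg K r) := by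
      rw [hc, ← ENNReal.ofReal_pow h1d, ← ENNReal.ofReal_mul (by positivity)]
      exact ENNReal.ofReal_le_ofReal hkey
    calc (ENNReal.ofReal (seg K r))⁻¹ * ((1 - del K r) ^ T0 * ENNReal.ofReal Real.pi)
        ≤ (ENNReal.ofReal (seg K r))⁻¹ * ENNReal.ofReal (seg K r) :=
          mul_le_mul_right h2 _
      _ = 1 := ENNReal.inv_mul_cancel hs0 hstop
  -- sum the tail
  have hsum : (∑' t : ℕ, ∑' x : Solution K, if fitness r x = 1 then 0
        else (solutionDist r (offspringOneBit inner) init t) x)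
      ≤ (T0 : ℝ≥0∞) + (del K r)⁻¹ := by
    rw [tsum_shift (fun t => ∑' x : Solution K, if fitness r x = 1 then 0
        else (solutionDist r (offspringOneBit inner) init t) x) T0]
    have hhead : (∑ i ∈ Finset.range T0, ∑' x : Solution K, if fitness r x = 1 then 0
          else (solutionDist r (offspringOneBit inner) init i) x) ≤ (T0 : ℝ≥0∞) := by
      calc (∑ i ∈ Finset.range T0, ∑' x : Solution K, if fitness r x = 1 then 0
            else (solutionDist r (offspringOneBit inner) init i) x)
          ≤ ∑ _i ∈ Finset.range T0, 1 :=
            Finset.sum_le_sum fun i _ => P_le_one inner init i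
        _ = (T0 : ℝ≥0∞) := by simp
    have htail : (∑' i : ℕ, ∑' x : Solution K, if fitness r x = 1 then 0
          else (solutionDist r (offspringOneBit inner) init (i + T0)) x)
        ≤ (del K r)⁻¹ := by
      have hterm : ∀ i : ℕ, (∑' x : Solution K, if fitness r x = 1 then 0
            else (solutionDist r (offspringOneBit inner) init (i + T0)) x)
          ≤ (1 - del K r) ^ i := by
        intro i
        calc (∑' x : Solution K, if fitness r x = 1 then 0
              else (solutionDist r (offspringOneBit inner) init (i + T0)) x)
            ≤ (ENNReal.ofReal (seg K r))⁻¹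
              * ((1 - del K r) ^ (i + T0) * ENNReal.ofReal Real.pi) :=
              P_le hr inner init (i + T0)
          _ = ((ENNReal.ofReal (seg K r))⁻¹ * ((1 - del K r) ^ T0 * ENNReal.ofReal Real.pi))
              * (1 - del K r) ^ i := by
              rw [pow_add]; ring
          _ ≤ 1 * (1 - del K r) ^ i := mul_le_mul_left habs _
          _ = (1 - del K r) ^ i := one_mul _
      calc (∑' i : ℕ, ∑' x : Solution K, if fitness r x = 1 then 0
            else (solutionDist r (offspringOneBit inner) init (i + T0)) x)
          ≤ ∑' i : ℕ, (1 - del K r) ^ i := ENNReal.tsum_le_tsum hterm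
        _ = (1 - (1 - del K r))⁻¹ := ENNReal.tsum_geometric _
        _ = (del K r)⁻¹ := by
            rw [ENNReal.sub_sub_cancel ENNReal.one_ne_top]
            rw [hdel]
            exact ENNReal.ofReal_le_one.mpr hδr1
    exact add_le_add hhead htail
  -- convert to ofReal and finish numerically
  have hdelinv : (del K r)⁻¹ = ENNReal.ofReal (108 * (r:ℝ) * ((K:ℝ) + 1)) := by
    rw [hdel, hδr, one_div, ENNReal.ofReal_inv_of_pos (by positivity), inv_inv]
  have hT0cast : (T0 : ℝ≥0∞) = ENNReal.ofReal (T0 : ℝ) := by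
    rw [ENNReal.ofReal_natCast]
  rw [hdelinv, hT0cast] at hsum
  rw [← ENNReal.ofReal_add (by positivity) (by positivity)] at hsum
  refine le_trans hsum (ENNReal.ofReal_le_ofReal ?_)
  -- final real inequality
  set Q : ℝ := (r:ℝ) * ((K:ℝ) + 2) with hQ
  have hr2 : (2:ℝ) ≤ (r:ℝ) := by exact_mod_cast hr
  have hQ4 : (4:ℝ) ≤ Q := by rw [hQ]; nlinarith
  have hQ0 : (0:ℝ) < Q := by linarith
  have hlogQ1 : (1:ℝ) ≤ Real.log Q := by
    rw [Real.le_log_iff_exp_le hQ0]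
    have := Real.exp_one_lt_d9
    linarith
  have hL6 : L ≤ 6 * Real.log Q := by
    have hnR : ((2 * r * (K + 2) : ℕ) : ℝ) = 2 * Q := by rw [hQ]; push_cast; ring
    have h1 : Real.pi / seg K r ≤ ((2 * r * (K + 2) : ℕ) : ℝ) ^ 3 := by
      rw [div_le_iff₀ hseg]
      exact segR_lb (hn8 (K := K) (r := r) hr)
    have h2 : L ≤ Real.log (((2 * r * (K + 2) : ℕ) : ℝ) ^ 3) := by
      rw [hL]
      apply Real.log_le_log (by positivity) h1
    have h3 : Real.log (((2 * r * (K + 2) : ℕ) : ℝ) ^ 3) = 3 * Real.log (2 * Q) := by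
      rw [hnR, Real.log_pow]
      push_cast; ring
    have h4 : Real.log (2 * Q) ≤ 2 * Real.log Q := by
      rw [Real.log_mul (by norm_num) (ne_of_gt hQ0)]
      have h5 : Real.log 2 ≤ Real.log Q := Real.log_le_log (by norm_num) (by linarith)
      have h6 : (0:ℝ) ≤ Real.log 2 := Real.log_nonneg (by norm_num)
      linarith
    calc L ≤ Real.log (((2 * r * (K + 2) : ℕ) : ℝ) ^ 3) := h2
      _ = 3 * Real.log (2 * Q) := h3
      _ ≤ 6 * Real.log Q := by linarith
  have hT0R : (T0:ℝ) ≤ L / δr + 1 := le_of_lt (Nat.ceil_lt_add_one (by positivity))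
  have hLd : L / δr = L * (108 * (r:ℝ) * ((K:ℝ) + 1)) := by
    rw [hδr]; field_simp
  have hRK : 108 * (r:ℝ) * ((K:ℝ) + 1) ≤ 108 * Q := by rw [hQ]; nlinarith
  have hRK0 : (0:ℝ) ≤ 108 * (r:ℝ) * ((K:ℝ) + 1) := by positivity
  have hprod : L * (108 * (r:ℝ) * ((K:ℝ) + 1)) ≤ (6 * Real.log Q) * (108 * Q) :=
    mul_le_mul hL6 hRK hRK0 (by positivity)
  have hgoal : (T0:ℝ) + 108 * (r:ℝ) * ((K:ℝ) + 1) ≤ 800 * (r:ℝ) * ((K:ℝ) + 2)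
      * Real.log ((r:ℝ) * ((K:ℝ) + 2)) := by
    have h800 : 800 * (r:ℝ) * ((K:ℝ) + 2) * Real.log ((r:ℝ) * ((K:ℝ) + 2))
        = 800 * Q * Real.log Q := by rw [hQ]; ring
    rw [h800]
    have h1 : (T0:ℝ) ≤ (6 * Real.log Q) * (108 * Q) + 1 := by
      calc (T0:ℝ) ≤ L / δr + 1 := hT0R
        _ = L * (108 * (r:ℝ) * ((K:ℝ) + 1)) + 1 := by rw [hLd]
        _ ≤ (6 * Real.log Q) * (108 * Q) + 1 := by linarith
    nlinarith [mul_le_mul hlogQ1 hQ4 (by norm_num : (0:ℝ) ≤ 4) (by linarith : (0:ℝ) ≤ Real.log Q)]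
  linarith [hgoal]

end ENASP


open ENAS in
/-- Theorem 1 (upper bound, one-bit): there is a constant `C > 0` such that for all `M ≥ 2`,
`r ≥ 2`, every initialization parameter `s ≥ 1`, and both inner-level mutations, the
(1+1)-ENAS algorithm with one-bit outer-level mutation finds an optimal solution of `Mcc`
within expected runtime `E[T] ≤ C · r · M · ln(r M)`.  (There are `M - 1 = (M - 2) + 1`
cells, so the chain is instantiated with `K := M - 2`.) -/
theorem enas_onebit_upper_bound :
    ∃ C : ℝ, 0 < C ∧
      ∀ (M r s : ℕ), 2 ≤ M → 2 ≤ r → ∀ hs : 1 ≤ s, ∀ inner : Bool,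
        expectedRuntime (K := M - 2) r (offspringOneBit inner) (initPMF (M - 2) s hs)
          ≤ ENNReal.ofReal (C * r * M * Real.log (r * M)) := by
  refine ⟨800, by norm_num, ?_⟩
  intro M r s hM hr hs inner
  rw [expectedRuntime]
  refine le_trans (ENASP.main_bound (K := M - 2) hr inner (initPMF (M - 2) s hs))
    (ENNReal.ofReal_le_ofReal (le_of_eq ?_))
  have hM2 : ((M - 2 : ℕ) : ℝ) + 2 = (M : ℝ) := by
    have h2 : ((M - 2 : ℕ) : ℝ) = (M : ℝ) - 2 := by
      rw [Nat.cast_sub hM]; norm_num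
    rw [h2]; ring
  rw [hM2]
end

section
/- For every solution x, F(x) ≤ 1; moreover F(x) = 1 if and only if every cell m ∈ {1, …, M−1} satisfies n_B^m + n_C^m ≥ 2r and n_A^m ≥ max(r, 2r − n_B^m), and additionally the last cell satisfies n_C^{M−1} ≥ r. -/
open scoped ENNReal

namespace ENAS

lemma iterm_le' (r : ℕ) (c : Cell) : Iterm r c ≤ 2 * r := min_le_right _ _

lemma iterm_eq' (r : ℕ) (c : Cell) : Iterm r c = 2 * r ↔ 2 * r ≤ c 1 + c 2 := by
  unfold Iterm; omega

lemma jterm_le' (r : ℕ) (c : Cell) : Jterm r c ≤ 2 * r := by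
  unfold Jterm; omega

lemma jterm_eq' (r : ℕ) (c : Cell) : Jterm r c = 2 * r ↔ max r (2 * r - c 1) ≤ c 0 := by
  unfold Jterm; omega

lemma key_ineq (n : ℕ) (hn : 3 ≤ n) (a b : ℝ) (ha : a ≤ n) (hb : b ≤ n) :
    ((1 / 2) * Real.sin (2 * Real.pi / n) * a +
      (Real.pi / n - (1 / 2) * Real.sin (2 * Real.pi / n)) * b) / Real.pi ≤ 1 ∧
    (((1 / 2) * Real.sin (2 * Real.pi / n) * a +
      (Real.pi / n - (1 / 2) * Real.sin (2 * Real.pi / n)) * b) / Real.pi = 1 ↔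
      a = n ∧ b = n) := by
  have hπ := Real.pi_pos
  have hnR : (0 : ℝ) < n := by
    have : (3 : ℝ) ≤ n := by exact_mod_cast hn
    linarith
  have hnR3 : (3 : ℝ) ≤ n := by exact_mod_cast hn
  have ht0 : 0 < 2 * Real.pi / n := by positivity
  have htπ : 2 * Real.pi / n < Real.pi := by
    rw [div_lt_iff₀ hnR]; nlinarith
  have hsin : 0 < Real.sin (2 * Real.pi / n) := Real.sin_pos_of_pos_of_lt_pi ht0 htπ
  have hlt : Real.sin (2 * Real.pi / n) < 2 * Real.pi / n := Real.sin_lt ht0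
  set T := (1 / 2) * Real.sin (2 * Real.pi / n) with hT
  set S := Real.pi / n - (1 / 2) * Real.sin (2 * Real.pi / n) with hS
  have hT0 : 0 < T := by rw [hT]; positivity
  have hS0 : 0 < S := by
    rw [hS]
    have h2 : 2 * Real.pi / (n : ℝ) = 2 * (Real.pi / n) := by ring
    nlinarith
  have hTS : T * n + S * n = Real.pi := by
    have h1 : T + S = Real.pi / n := by rw [hT, hS]; ring
    have h2 : T * n + S * n = (T + S) * n := by ring
    rw [h2, h1]
    field_simp
  have hle : T * a + S * b ≤ Real.pi := by
    have h1 : T * a ≤ T * n := mul_le_mul_of_nonneg_left ha hT0.le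
    have h2 : S * b ≤ S * n := mul_le_mul_of_nonneg_left hb hS0.le
    linarith
  constructor
  · rw [div_le_one hπ]; exact hle
  · rw [div_eq_one_iff_eq hπ.ne']
    constructor
    · intro h
      have e1 : T * ((n : ℝ) - a) = 0 := by
        have h2 : S * b ≤ S * n := mul_le_mul_of_nonneg_left hb hS0.le
        have h3 : 0 ≤ T * ((n : ℝ) - a) := mul_nonneg hT0.le (by linarith)
        nlinarith
      have e2 : S * ((n : ℝ) - b) = 0 := by
        have h1 : T * a ≤ T * n := mul_le_mul_of_nonneg_left ha hT0.le
        have h3 : 0 ≤ S * ((n : ℝ) - b) := mul_nonneg hS0.le (by linarith)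
        nlinarith
      constructor
      · rcases mul_eq_zero.mp e1 with h' | h'
        · exact absurd h' hT0.ne'
        · linarith
      · rcases mul_eq_zero.mp e2 with h' | h'
        · exact absurd h' hS0.ne'
        · linarith
    · rintro ⟨h1, h2⟩
      rw [h1, h2]; exact hTS

end ENAS

open ENAS in
/-- For every solution `x` of the `Mcc` problem (with `M = K + 2 ≥ 2` classes and `r ≥ 2`),
`F(x) ≤ 1`, and `F(x) = 1` iff every cell `m` satisfies `n_B^m + n_C^m ≥ 2r` and
`n_A^m ≥ max(r, 2r − n_B^m)`, and additionally the last cell satisfies `n_C^{M−1} ≥ r`. -/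
theorem fitness_le_one_and_optimum_characterization (K r : ℕ) (hr : 2 ≤ r) (x : Solution K) :
    fitness r x ≤ 1 ∧
      (fitness r x = 1 ↔
        ((∀ m : Fin (K + 1), 2 * r ≤ x m 1 + x m 2 ∧ max r (2 * r - x m 1) ≤ x m 0) ∧
          r ≤ x (Fin.last K) 2)) := by
  classical
  have hn3 : 3 ≤ 2 * r * (K + 2) := by
    have h1 : 4 ≤ 2 * r := by omega
    have h2 : 2 ≤ K + 2 := by omega
    calc 3 ≤ 4 * 2 := by norm_num
    _ ≤ 2 * r * (K + 2) := Nat.mul_le_mul h1 h2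
  have hIle : Ival r x ≤ (K + 1) * (2 * r) := by
    unfold Ival
    calc ∑ m, Iterm r (x m) ≤ ∑ _m : Fin (K + 1), 2 * r :=
          Finset.sum_le_sum fun i _ => iterm_le' r (x i)
    _ = (K + 1) * (2 * r) := by simp [Finset.sum_const, Finset.card_univ]
  have hJle : Jval r x ≤ (K + 1) * (2 * r) := by
    unfold Jval
    calc ∑ m, Jterm r (x m) ≤ ∑ _m : Fin (K + 1), 2 * r :=
          Finset.sum_le_sum fun i _ => jterm_le' r (x i)
    _ = (K + 1) * (2 * r) := by simp [Finset.sum_const, Finset.card_univ]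
  have hepsnn : (0 : ℤ) ≤ eps r (x (Fin.last K)) := le_max_left _ _
  have hncast : ((2 * r * (K + 2) : ℕ) : ℝ) = ((K + 1) * (2 * r) : ℕ) + 2 * r := by
    push_cast; ring
  have ha : (Ival r x : ℝ) + 2 * r ≤ ((2 * r * (K + 2) : ℕ) : ℝ) := by
    rw [hncast]
    have : (Ival r x : ℝ) ≤ ((K + 1) * (2 * r) : ℕ) := by exact_mod_cast hIle
    linarith
  have hb : (Jval r x : ℝ) + 2 * r - (eps r (x (Fin.last K)) : ℝ) ≤
      ((2 * r * (K + 2) : ℕ) : ℝ) := by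
    rw [hncast]
    have h1 : (Jval r x : ℝ) ≤ ((K + 1) * (2 * r) : ℕ) := by exact_mod_cast hJle
    have h2 : (0 : ℝ) ≤ (eps r (x (Fin.last K)) : ℝ) := by exact_mod_cast hepsnn
    linarith
  have main := key_ineq (2 * r * (K + 2)) hn3 ((Ival r x : ℝ) + 2 * r)
    ((Jval r x : ℝ) + 2 * r - (eps r (x (Fin.last K)) : ℝ)) ha hb
  have hfit : fitness r x =
      ((1 / 2) * Real.sin (2 * Real.pi / (2 * r * (K + 2) : ℕ)) * ((Ival r x : ℝ) + 2 * r) +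
        (Real.pi / (2 * r * (K + 2) : ℕ) -
          (1 / 2) * Real.sin (2 * Real.pi / (2 * r * (K + 2) : ℕ))) *
          ((Jval r x : ℝ) + 2 * r - (eps r (x (Fin.last K)) : ℝ))) / Real.pi := by
    simp only [fitness]
  rw [hfit]
  refine ⟨main.1, main.2.trans ?_⟩
  -- translate a = n
  have hIiff : Ival r x = (K + 1) * (2 * r) ↔ ∀ m, Iterm r (x m) = 2 * r := by
    unfold Ival
    rw [show (K + 1) * (2 * r) = ∑ _m : Fin (K + 1), 2 * r by
      simp [Finset.sum_const, Finset.card_univ]]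
    rw [Finset.sum_eq_sum_iff_of_le fun i _ => iterm_le' r (x i)]
    simp
  have hJiff : Jval r x = (K + 1) * (2 * r) ↔ ∀ m, Jterm r (x m) = 2 * r := by
    unfold Jval
    rw [show (K + 1) * (2 * r) = ∑ _m : Fin (K + 1), 2 * r by
      simp [Finset.sum_const, Finset.card_univ]]
    rw [Finset.sum_eq_sum_iff_of_le fun i _ => jterm_le' r (x i)]
    simp
  have haiff : ((Ival r x : ℝ) + 2 * r = ((2 * r * (K + 2) : ℕ) : ℝ)) ↔
      Ival r x = (K + 1) * (2 * r) := by
    rw [hncast]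
    constructor
    · intro h
      have : (Ival r x : ℝ) = ((K + 1) * (2 * r) : ℕ) := by linarith
      exact_mod_cast this
    · intro h
      rw [h]
  have hbiff : ((Jval r x : ℝ) + 2 * r - (eps r (x (Fin.last K)) : ℝ) =
      ((2 * r * (K + 2) : ℕ) : ℝ)) ↔
      (Jval r x = (K + 1) * (2 * r) ∧ eps r (x (Fin.last K)) = 0) := by
    constructor
    · intro h
      have hz : ((Jval r x : ℤ) + 2 * r - eps r (x (Fin.last K)) : ℤ) =
          ((2 * r * (K + 2) : ℕ) : ℤ) := by exact_mod_cast h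
      have hn' : ((2 * r * (K + 2) : ℕ) : ℤ) = ((K + 1) * (2 * r) : ℕ) + 2 * r := by
        push_cast; ring
      rw [hn'] at hz
      have hJle' : (Jval r x : ℤ) ≤ ((K + 1) * (2 * r) : ℕ) := by exact_mod_cast hJle
      have h1 : (Jval r x : ℤ) = ((K + 1) * (2 * r) : ℕ) :=
        le_antisymm hJle' (by linarith)
      refine ⟨by exact_mod_cast h1, le_antisymm (by linarith) hepsnn⟩
    · rintro ⟨h1, h2⟩
      rw [h1, h2]
      push_cast
      ring
  rw [haiff, hbiff, hIiff, hJiff]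
  constructor
  · rintro ⟨hI, hJ, hE⟩
    refine ⟨fun m => ⟨(iterm_eq' r (x m)).mp (hI m), (jterm_eq' r (x m)).mp (hJ m)⟩, ?_⟩
    have h1 := (iterm_eq' r (x (Fin.last K))).mp (hI (Fin.last K))
    unfold eps at hE
    omega
  · rintro ⟨h, hlast⟩
    refine ⟨fun m => (iterm_eq' r (x m)).mpr (h m).1,
      fun m => (jterm_eq' r (x m)).mpr (h m).2, ?_⟩
    unfold eps
    omega
end

section
/- For all integers r ≥ 2 and M ≥ 2, with n = 2rM, one has (n − 2r)·(π/n − (1/2)·sin(2π/n)) < (1/2)·sin(2π/n). -/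
/-- For all integers `r ≥ 2` and `M ≥ 2`, with `n = 2rM`, one has
`(n − 2r)·(π/n − (1/2)·sin(2π/n)) < (1/2)·sin(2π/n)`, i.e. `(n − 2r)·Ar_seg < Ar_tri`. -/
theorem seg_area_sum_lt_tri_area (r M : ℕ) (hr : 2 ≤ r) (hM : 2 ≤ M) :
    (2 * (r : ℝ) * (M : ℝ) - 2 * (r : ℝ))
        * (Real.pi / (2 * (r : ℝ) * (M : ℝ))
            - (1 / 2) * Real.sin (2 * Real.pi / (2 * (r : ℝ) * (M : ℝ))))
      < (1 / 2) * Real.sin (2 * Real.pi / (2 * (r : ℝ) * (M : ℝ))) := by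
  have hr' : (2 : ℝ) ≤ r := by exact_mod_cast hr
  have hM' : (2 : ℝ) ≤ M := by exact_mod_cast hM
  set n : ℝ := 2 * (r : ℝ) * (M : ℝ) with hn
  have hn8 : (8 : ℝ) ≤ n := by nlinarith
  have hnpos : (0 : ℝ) < n := by linarith
  have hpi1 : (3.141592 : ℝ) < Real.pi := Real.pi_gt_d6
  have hpi2 : Real.pi < 3.15 := Real.pi_lt_d2
  set x : ℝ := 2 * Real.pi / n with hx
  have hxpos : 0 < x := by positivity
  have hx1 : x ≤ 1 := by
    rw [hx, div_le_one hnpos]; nlinarith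
  have hsin : x - x ^ 3 / 4 < Real.sin x := by have := Real.sin_gt_sub_cube hxpos; linarith [pow_pos hxpos 3]
  have hsinlt : Real.sin x < x := Real.sin_lt hxpos
  have hxval : x * n = 2 * Real.pi := by
    rw [hx]; field_simp
  have hpin : Real.pi / n = x / 2 := by
    rw [hx]; ring
  rw [hpin]
  -- key: (n - 2r + 1) * x^2 ≤ 4, since (n-2r+1) * pi^2 ≤ n^2
  have hkey : (n - 2 * (r : ℝ) + 1) * x ^ 2 ≤ 4 := by
    have hx2 : x ^ 2 * n ^ 2 = 4 * Real.pi ^ 2 := by nlinarith [hxval]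
    have hpi10 : Real.pi ^ 2 ≤ 10 := by nlinarith
    have harith : 10 * (n - 2 * (r : ℝ) + 1) ≤ n ^ 2 := by
      rw [hn]; nlinarith
    nlinarith [mul_le_mul_of_nonneg_right harith (sq_nonneg x), hx2, hpi10]
  have ha : (4:ℝ) ≤ n - 2 * (r:ℝ) := by rw [hn]; nlinarith
  nlinarith [mul_le_mul_of_nonneg_right hkey hxpos.le,
    mul_lt_mul_of_pos_left (show x - Real.sin x < x ^ 3 / 4 by linarith)
      (show (0:ℝ) < n - 2 * (r:ℝ) by linarith), hsin, hxpos]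
end
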